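/- Let χ : ℝ → ℂ be differentiable with χ(x) → 0 as |x| → ∞ and |χ'(x)| ≤ φ(|x|), where φ : [0,∞) → [0,∞) is non-increasing with ∫₀^∞ φ(s) ds < ∞. Let P be a projection-valued measure on ℝ in a separable Hilbert space H and S a trace-class operator. Then for intervals Δ¹ = (−∞, b₁) and Δ² = [a₂, ∞) with δ = a₂ − b₁ ≥ 0, the double operator integral S_χ = ∫∫ χ(x−y) P(dx) S P(dy) satisfies ‖P(Δ¹) S_χ P(Δ²)‖₁ ≤ ‖S‖₁ ∫_δ^∞ φ(s) ds. -/

import Mathlib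

open Filter MeasureTheory

variable {H : Type*} [NormedAddCommGroup H] [InnerProductSpace ℂ H] [CompleteSpace H]

/-- A projection-valued measure on `ℝ`. -/
structure ProjValMeasure (H : Type*) [NormedAddCommGroup H] [InnerProductSpace ℂ H]
    [CompleteSpace H] where
  P : Set ℝ → (H →L[ℂ] H)
  idem : ∀ s, IsIdempotentElem (P s)
  selfadj : ∀ s, IsSelfAdjoint (P s)
  empty : P ∅ = 0
  univ : P Set.univ = 1
  inter : ∀ s t, P (s ∩ t) = P s ∘L P t
  sigma_additive : ∀ (s : ℕ → Set ℝ), Pairwise (Function.onFun Disjoint s) →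
    ∀ x : H, HasSum (fun n => P (s n) x) (P (⋃ n, s n) x)

/-- The `i`-th grid point of the uniform partition of `[-n, n]` into `n²` pieces. -/
noncomputable def gridPt (n i : ℕ) : ℝ := -(n : ℝ) + 2 * i / n

/-- Riemann–Stieltjes sum for the double operator integral
`∫∫ χ(x-y) P(dx) S P(dy)` over the square `[-n,n] × [-n,n]`. -/
noncomputable def doubleStieltjesSum (Pm : ProjValMeasure H) (χ : ℝ → ℂ)
    (S : H →L[ℂ] H) (n : ℕ) : H →L[ℂ] H :=
  ∑ i ∈ Finset.range (n * n), ∑ j ∈ Finset.range (n * n),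
    χ (gridPt n i - gridPt n j) •
      (Pm.P (Set.Ico (gridPt n i) (gridPt n (i + 1))) ∘L S ∘L
        Pm.P (Set.Ico (gridPt n j) (gridPt n (j + 1))))

/-- `Sχ = ∫∫ χ(x−y) P(dx) S P(dy)` as a limit of double Riemann–Stieltjes sums. -/
def IsDoubleStieltjesIntegral (Pm : ProjValMeasure H) (χ : ℝ → ℂ)
    (S Sχ : H →L[ℂ] H) : Prop :=
  Tendsto (fun n => doubleStieltjesSum Pm χ S n) atTop (nhds Sχ)

local notation "⟪" x ", " y "⟫" => @inner ℂ _ _ x y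

lemma aux_inner_P (Pm : ProjValMeasure H) (s : Set ℝ) (x y : H) :
    ⟪Pm.P s x, y⟫ = ⟪x, Pm.P s y⟫ := by
  have h := (Pm.selfadj s)
  rw [ContinuousLinearMap.isSelfAdjoint_iff'] at h
  conv_lhs => rw [← h]
  exact ContinuousLinearMap.adjoint_inner_left _ _ _

lemma aux_P_apply_sq (Pm : ProjValMeasure H) (s : Set ℝ) (x : H) :
    (‖Pm.P s x‖ : ℝ) ^ 2 = RCLike.re ⟪x, Pm.P s x⟫ := by
  have hid : Pm.P s (Pm.P s x) = Pm.P s x := by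
    have h := Pm.idem s
    unfold IsIdempotentElem at h
    have := DFunLike.congr_fun h x
    simpa [ContinuousLinearMap.mul_apply] using this
  rw [← @inner_self_eq_norm_sq ℂ, aux_inner_P, hid]

lemma aux_P_apply_le (Pm : ProjValMeasure H) (s : Set ℝ) (x : H) :
    ‖Pm.P s x‖ ≤ ‖x‖ := by
  have h2 := aux_P_apply_sq Pm s x
  have hcs : RCLike.re ⟪x, Pm.P s x⟫ ≤ ‖x‖ * ‖Pm.P s x‖ := by
    calc RCLike.re ⟪x, Pm.P s x⟫ ≤ ‖⟪x, Pm.P s x⟫‖ := RCLike.re_le_norm _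
    _ ≤ ‖x‖ * ‖Pm.P s x‖ := norm_inner_le_norm _ _
  nlinarith [norm_nonneg (Pm.P s x), norm_nonneg x]

lemma aux_P_union (Pm : ProjValMeasure H) {s t : Set ℝ} (h : Disjoint s t) :
    Pm.P (s ∪ t) = Pm.P s + Pm.P t := by
  ext x
  set f : ℕ → Set ℝ := fun k => if k = 0 then s else if k = 1 then t else ∅ with hf
  have hdis : Pairwise (Function.onFun Disjoint f) := by
    intro i j hij
    unfold Function.onFun
    simp only [hf]
    rcases eq_or_ne i 0 with hi | hi <;> rcases eq_or_ne j 0 with hj | hj <;>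
      rcases eq_or_ne i 1 with hi1 | hi1 <;> rcases eq_or_ne j 1 with hj1 | hj1 <;>
      simp_all [h, h.symm, Set.disjoint_empty, Set.empty_disjoint]
  have hU : (⋃ n, f n) = s ∪ t := by
    ext a
    simp only [Set.mem_iUnion, hf]
    constructor
    · rintro ⟨n, hn⟩
      rcases eq_or_ne n 0 with h0 | h0
      · left; simpa [h0] using hn
      · rcases eq_or_ne n 1 with h1 | h1
        · right; simpa [h0, h1] using hn
        · simp [h0, h1] at hn
    · rintro (ha | ha)
      · exact ⟨0, by simpa⟩
      · exact ⟨1, by simpa⟩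
  have h1 := Pm.sigma_additive f hdis x
  rw [hU] at h1
  have h2 : HasSum (fun n => Pm.P (f n) x) (Pm.P s x + Pm.P t x) := by
    have : ∀ n ∉ ({0, 1} : Finset ℕ), Pm.P (f n) x = 0 := by
      intro n hn
      simp only [Finset.mem_insert, Finset.mem_singleton] at hn
      push_neg at hn
      simp [hf, hn.1, hn.2, Pm.empty]
    have : HasSum (fun n => Pm.P (f n) x) (∑ n ∈ ({0, 1} : Finset ℕ), Pm.P (f n) x) :=
      hasSum_sum_of_ne_finset_zero this
    simpa [hf] using this
  have := h1.unique h2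
  simpa using this

lemma aux_P_sum (Pm : ProjValMeasure H) (t : Finset ℕ) (A : ℕ → Set ℝ)
    (hdisj : ∀ i ∈ t, ∀ j ∈ t, i ≠ j → Disjoint (A i) (A j)) :
    ∑ i ∈ t, Pm.P (A i) = Pm.P (⋃ i ∈ t, A i) := by
  classical
  induction t using Finset.induction_on with
  | empty => simp [Pm.empty]
  | @insert a s ha ih =>
    have hd : Disjoint (A a) (⋃ i ∈ s, A i) := by
      rw [Set.disjoint_iUnion_right]
      intro i
      rw [Set.disjoint_iUnion_right]
      intro hi
      exact hdisj a (Finset.mem_insert_self a s) i (Finset.mem_insert_of_mem hi)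
        (by rintro rfl; exact ha hi)
    rw [Finset.sum_insert ha, ih (fun i hi j hj hij =>
      hdisj i (Finset.mem_insert_of_mem hi) j (Finset.mem_insert_of_mem hj) hij)]
    rw [← aux_P_union Pm hd]
    congr 1
    simp [Set.biUnion_insert]

lemma aux_norm_sum_smul (Pm : ProjValMeasure H) (t : Finset ℕ) (A : ℕ → Set ℝ)
    (hdisj : ∀ i ∈ t, ∀ j ∈ t, i ≠ j → Disjoint (A i) (A j))
    (c : ℕ → ℂ) (C : ℝ) (hC : 0 ≤ C)
    (hc : ∀ i ∈ t, Pm.P (A i) = 0 ∨ ‖c i‖ ≤ C) :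
    ‖∑ i ∈ t, c i • Pm.P (A i)‖ ≤ C := by
  classical
  apply ContinuousLinearMap.opNorm_le_bound _ hC
  intro x
  have key : ‖(∑ i ∈ t, c i • Pm.P (A i)) x‖ ^ 2
      = ∑ i ∈ t, ‖c i‖ ^ 2 * ‖Pm.P (A i) x‖ ^ 2 := by
    rw [← @inner_self_eq_norm_sq ℂ]
    simp only [ContinuousLinearMap.sum_apply, ContinuousLinearMap.smul_apply]
    rw [sum_inner]
    rw [map_sum]
    apply Finset.sum_congr rfl
    intro i hi
    rw [inner_sum]
    rw [Finset.sum_eq_single i]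
    · rw [inner_smul_left, inner_smul_right]
      have h1 : ⟪Pm.P (A i) x, Pm.P (A i) x⟫ = (‖Pm.P (A i) x‖ : ℂ) ^ 2 :=
        inner_self_eq_norm_sq_to_K _
      rw [h1]
      have h2 : (starRingEnd ℂ) (c i) * (c i * (‖Pm.P (A i) x‖ : ℂ) ^ 2)
          = ((‖c i‖ ^ 2 * ‖Pm.P (A i) x‖ ^ 2 : ℝ) : ℂ) := by
        rw [← mul_assoc, mul_comm ((starRingEnd ℂ) (c i)) (c i), Complex.mul_conj']
        push_cast
        ring
      rw [h2]
      simp [← Complex.ofReal_pow]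
    · intro j hj hji
      have hz : Pm.P (A i) ∘L Pm.P (A j) = 0 := by
        rw [← Pm.inter]
        rw [Set.disjoint_iff_inter_eq_empty.mp (hdisj i hi j hj (Ne.symm hji))]
        exact Pm.empty
      have : ⟪Pm.P (A i) x, Pm.P (A j) x⟫ = 0 := by
        rw [aux_inner_P]
        have : Pm.P (A i) (Pm.P (A j) x) = 0 := by
          have := DFunLike.congr_fun hz x
          simpa using this
        rw [this, inner_zero_right]
      rw [inner_smul_left, inner_smul_right, this]
      simp
    · intro h; exact absurd hi h
  have hsum_le : ∑ i ∈ t, ‖c i‖ ^ 2 * ‖Pm.P (A i) x‖ ^ 2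
      ≤ C ^ 2 * ∑ i ∈ t, ‖Pm.P (A i) x‖ ^ 2 := by
    rw [Finset.mul_sum]
    apply Finset.sum_le_sum
    intro i hi
    rcases hc i hi with h0 | hle
    · simp [h0]
    · have h2 : ‖c i‖ ^ 2 ≤ C ^ 2 := by nlinarith [norm_nonneg (c i)]
      exact mul_le_mul_of_nonneg_right h2 (sq_nonneg _)
  have hproj : ∑ i ∈ t, ‖Pm.P (A i) x‖ ^ 2 ≤ ‖x‖ ^ 2 := by
    have : ∑ i ∈ t, ‖Pm.P (A i) x‖ ^ 2
        = RCLike.re ⟪x, Pm.P (⋃ i ∈ t, A i) x⟫ := by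
      rw [← aux_P_sum Pm t A hdisj]
      simp only [ContinuousLinearMap.sum_apply]
      rw [inner_sum, map_sum]
      exact Finset.sum_congr rfl fun i _ => aux_P_apply_sq Pm (A i) x
    rw [this, ← aux_P_apply_sq]
    have h1 := aux_P_apply_le Pm (⋃ i ∈ t, A i) x
    nlinarith [norm_nonneg (Pm.P (⋃ i ∈ t, A i) x), norm_nonneg x]
  have hfin : ‖(∑ i ∈ t, c i • Pm.P (A i)) x‖ ^ 2 ≤ (C * ‖x‖) ^ 2 := by
    rw [key]
    calc _ ≤ C ^ 2 * ∑ i ∈ t, ‖Pm.P (A i) x‖ ^ 2 := hsum_le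
    _ ≤ C ^ 2 * ‖x‖ ^ 2 := by nlinarith
    _ = (C * ‖x‖) ^ 2 := by ring
  have hnn : (0:ℝ) ≤ C * ‖x‖ := by positivity
  nlinarith [norm_nonneg ((∑ i ∈ t, c i • Pm.P (A i)) x)]

lemma aux_nu_sum (ν : (H →L[ℂ] H) → ℝ) (hν0 : ν 0 = 0)
    (hνtri : ∀ S T, ν (S + T) ≤ ν S + ν T)
    (t : Finset ℕ) (f : ℕ → (H →L[ℂ] H)) :
    ν (∑ i ∈ t, f i) ≤ ∑ i ∈ t, ν (f i) := by
  classical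
  induction t using Finset.induction_on with
  | empty => simp [hν0]
  | @insert a s ha ih =>
    rw [Finset.sum_insert ha, Finset.sum_insert ha]
    exact (hνtri _ _).trans (by linarith)

lemma aux_swap {α : Type*} [AddCommMonoid α] (N M : ℕ) (F : ℕ → ℕ → α) :
    ∑ i ∈ Finset.range N, ∑ k ∈ Finset.range (i + M), F i k
      = ∑ k ∈ Finset.range (N + M), ∑ i ∈ (Finset.range N).filter (fun i => k < i + M),
          F i k := by
  have h1 : ∀ i ∈ Finset.range N, ∑ k ∈ Finset.range (i + M), F i k
      = ∑ k ∈ Finset.range (N + M), if k < i + M then F i k else 0 := by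
    intro i hi
    rw [Finset.mem_range] at hi
    rw [← Finset.sum_filter]
    congr 1
    ext k
    simp only [Finset.mem_filter, Finset.mem_range]
    omega
  rw [Finset.sum_congr rfl h1, Finset.sum_comm]
  apply Finset.sum_congr rfl
  intro k _
  rw [← Finset.sum_filter]

lemma aux_factor (t₁ t₂ : Finset ℕ) (A B : ℕ → (H →L[ℂ] H)) (c : ℕ → ℂ) (S : H →L[ℂ] H) :
    ∑ i ∈ t₁, ∑ j ∈ t₂, c j • (A i ∘L S ∘L B j)
      = (∑ i ∈ t₁, A i) ∘L S ∘L (∑ j ∈ t₂, c j • B j) := by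
  ext v
  simp only [ContinuousLinearMap.sum_apply, ContinuousLinearMap.smul_apply,
    ContinuousLinearMap.comp_apply, map_sum, _root_.map_smul]
  rw [Finset.sum_comm]
  simp [Finset.smul_sum]

lemma aux_II {E : Type*} [NormedAddCommGroup E] [NormedSpace ℝ E] (g : ℝ → E)
    (hg : AEStronglyMeasurable g volume) (c : ℝ) (hb : ∀ t, ‖g t‖ ≤ c) (a b : ℝ) :
    IntervalIntegrable g volume a b := by
  rw [intervalIntegrable_iff]
  apply Integrable.mono' (g := fun _ => c)
  · exact integrableOn_const measure_Ioc_lt_top.ne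
  · exact hg.restrict
  · exact ae_of_all _ hb

set_option maxHeartbeats 1000000 in
lemma hmain_aux (Pm : ProjValMeasure H)
    (ν : (H →L[ℂ] H) → ℝ)
    (hν0 : ν 0 = 0) (hνnn : ∀ S, 0 ≤ ν S)
    (hνtri : ∀ S T, ν (S + T) ≤ ν S + ν T)
    (hνideal : ∀ (A S B : H →L[ℂ] H), ν (A ∘L S ∘L B) ≤ ‖A‖ * ν S * ‖B‖)
    (χ : ℝ → ℂ) (χ' : ℝ → ℂ) (φ : ℝ → ℝ)
    (hχderiv : ∀ x, HasDerivAt χ (χ' x) x)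
    (hχdecay : Tendsto χ (cocompact ℝ) (nhds 0))
    (hχ'bound : ∀ x, ‖χ' x‖ ≤ φ |x|)
    (hφnn : ∀ s, 0 ≤ φ s)
    (hφmono : AntitoneOn φ (Set.Ici (0 : ℝ)))
    (hφint : IntegrableOn φ (Set.Ioi (0 : ℝ)) volume)
    (S : H →L[ℂ] H)
    (b₁ a₂ : ℝ) (hδ : 0 ≤ a₂ - b₁) (n : ℕ) (hn : 1 ≤ n) :
    ν (Pm.P (Set.Iio b₁) ∘L doubleStieltjesSum Pm χ S n ∘L Pm.P (Set.Ici a₂))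
      ≤ ν S * ∫ u in Set.Ioi (a₂ - b₁ - 2 / (n : ℝ)), φ (max u 0) := by
  classical
  have hn0 : (0:ℝ) < n := by exact_mod_cast hn
  have hnne : (n:ℝ) ≠ 0 := ne_of_gt hn0
  have h2n : (0:ℝ) < 2 / n := by positivity
  set φm : ℝ → ℝ := fun u => φ (max u 0) with hφmdef
  have hφm_anti : Antitone φm := fun u v huv =>
    hφmono (Set.mem_Ici.mpr (le_max_right u 0)) (Set.mem_Ici.mpr (le_max_right v 0))
      (max_le_max huv le_rfl)
  have hφm_meas : Measurable φm := hφm_anti.measurable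
  have hφm_nn : ∀ u, 0 ≤ φm u := fun u => hφnn _
  have hφm_le : ∀ u, φm u ≤ φ 0 := fun u =>
    hφmono (Set.mem_Ici.mpr le_rfl) (Set.mem_Ici.mpr (le_max_right u 0)) (le_max_right u 0)
  have hχ'm : ∀ t : ℝ, ‖χ' t‖ ≤ φm |t| := by
    intro t
    have h : φm |t| = φ |t| := by simp [hφmdef, max_eq_left (abs_nonneg t)]
    rw [h]; exact hχ'bound t
  have hχ'le : ∀ t : ℝ, ‖χ' t‖ ≤ φ 0 := fun t => (hχ'm t).trans (hφm_le _)
  have hχ'meas : Measurable χ' := by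
    have h : χ' = deriv χ := funext fun t => ((hχderiv t).deriv).symm
    rw [h]; exact measurable_deriv χ
  set y₀ : ℝ := a₂ - 2 / n with hy₀def
  set γ : ℝ := a₂ - b₁ - 2 / n with hγdef
  have hy₀b : y₀ - b₁ = γ := by rw [hy₀def, hγdef]; ring
  set Φ : ℝ → ℝ := Set.indicator (Set.Ioi γ) φm with hΦdef
  set Ψ : ℝ → ℝ := fun s => Φ (y₀ - s) with hΨdef
  have hΦ_nn : ∀ u, 0 ≤ Φ u := fun u => Set.indicator_nonneg (fun a _ => hφm_nn a) u
  have hΦ_le : ∀ u, Φ u ≤ φ 0 := by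
    intro u
    by_cases h : u ∈ Set.Ioi γ
    · rw [hΦdef, Set.indicator_of_mem h]; exact hφm_le u
    · rw [hΦdef, Set.indicator_of_notMem h]; exact hφnn 0
  have hΦmeas : Measurable Φ := hφm_meas.indicator measurableSet_Ioi
  have hΨmeas : Measurable Ψ := hΦmeas.comp (measurable_const.sub measurable_id)
  have hΨ_nn : ∀ s, 0 ≤ Ψ s := fun s => hΦ_nn _
  have hΨ_le : ∀ s, Ψ s ≤ φ 0 := fun s => hΦ_le _
  have hΨII : ∀ a b : ℝ, IntervalIntegrable Ψ volume a b := by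
    intro a b
    apply aux_II Ψ hΨmeas.aestronglyMeasurable (φ 0)
    intro t
    rw [Real.norm_eq_abs, abs_of_nonneg (hΨ_nn t)]
    exact hΨ_le t
  -- integrability of φm on Ioi γ
  have hIoi0 : IntegrableOn φm (Set.Ioi 0) volume := by
    apply hφint.congr_fun (fun u hu => ?_) measurableSet_Ioi
    simp [hφmdef, max_eq_left (le_of_lt (Set.mem_Ioi.mp hu))]
  have hIφmγ : IntegrableOn φm (Set.Ioi γ) volume := by
    rcases le_or_gt 0 γ with hc | hc
    · have h1 : IntegrableOn φm (Set.Ioi γ) volume := by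
        apply (hφint.mono_set (Set.Ioi_subset_Ioi hc)).congr_fun (fun u hu => ?_) measurableSet_Ioi
        simp [hφmdef, max_eq_left (le_of_lt (lt_of_le_of_lt hc hu))]
      exact h1
    · have h1 : IntegrableOn φm (Set.Ioc γ 0) volume := by
        apply Integrable.mono' (g := fun _ => φ 0)
        · exact integrableOn_const measure_Ioc_lt_top.ne
        · exact (hφm_meas.aestronglyMeasurable).restrict
        · exact ae_of_all _ fun u => by
            rw [Real.norm_eq_abs, abs_of_nonneg (hφm_nn u)]; exact hφm_le u
      have := h1.union hIoi0
      rwa [Set.Ioc_union_Ioi_eq_Ioi (le_of_lt hc)] at this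
  have hΦint : Integrable Φ volume := by
    rw [hΦdef]
    exact (integrable_indicator_iff measurableSet_Ioi).mpr hIφmγ
  -- grid facts
  have hgrid : ∀ i : ℕ, gridPt n i = -(n:ℝ) + 2 * i / n := fun i => rfl
  have hgrid_succ : ∀ i : ℕ, gridPt n (i+1) = gridPt n i + 2 / n := by
    intro i
    rw [hgrid, hgrid]
    push_cast
    field_simp
    ring
  have hgrid_mono : ∀ i j : ℕ, i ≤ j → gridPt n i ≤ gridPt n j := by
    intro i j hij
    rw [hgrid, hgrid]
    have : (i:ℝ) ≤ j := by exact_mod_cast hij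
    have h1 : 2 * (i:ℝ) / n ≤ 2 * (j:ℝ) / n := by
      gcongr
    linarith
  have hIdisj : ∀ i j : ℕ, i ≠ j →
      Disjoint (Set.Ico (gridPt n i) (gridPt n (i+1))) (Set.Ico (gridPt n j) (gridPt n (j+1))) := by
    intro i j hij
    rcases lt_or_gt_of_ne hij with h | h
    · apply Set.Ico_disjoint_Ico.mpr
      have : gridPt n (i+1) ≤ gridPt n j := hgrid_mono _ _ h
      exact le_trans (min_le_left _ _) (le_trans this (le_max_right _ _))
    · apply Set.Ico_disjoint_Ico.mpr
      have : gridPt n (j+1) ≤ gridPt n i := hgrid_mono _ _ h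
      exact le_trans (min_le_right _ _) (le_trans this (le_max_left _ _))
  set AQ : ℕ → Set ℝ := fun i => Set.Iio b₁ ∩ Set.Ico (gridPt n i) (gridPt n (i+1)) with hAQdef
  set AR : ℕ → Set ℝ := fun j => Set.Ico (gridPt n j) (gridPt n (j+1)) ∩ Set.Ici a₂ with hARdef
  have hAQdisj : ∀ i j : ℕ, i ≠ j → Disjoint (AQ i) (AQ j) := fun i j hij =>
    ((hIdisj i j hij).mono Set.inter_subset_right Set.inter_subset_right)
  have hARdisj : ∀ i j : ℕ, i ≠ j → Disjoint (AR i) (AR j) := fun i j hij =>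
    ((hIdisj i j hij).mono Set.inter_subset_left Set.inter_subset_left)
  set Q : ℕ → (H →L[ℂ] H) := fun i => Pm.P (AQ i) with hQdef
  set Rp : ℕ → (H →L[ℂ] H) := fun j => Pm.P (AR j) with hRpdef
  -- reduce to ε
  apply le_of_forall_pos_le_add
  intro ε hε
  have hνS1 : (0:ℝ) < ν S + 1 := by linarith [hνnn S]
  set ε' : ℝ := ε / (ν S + 1) with hε'def
  have hε'pos : 0 < ε' := div_pos hε hνS1
  have hε'mul : ν S * ε' ≤ ε := by
    rw [hε'def]
    calc ν S * (ε / (ν S + 1)) ≤ (ν S + 1) * (ε / (ν S + 1)) := by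
          apply mul_le_mul_of_nonneg_right (by linarith) (le_of_lt (div_pos hε hνS1))
    _ = ε := by field_simp
  -- choose M using the decay of χ
  obtain ⟨K, hKcomp, hKsub⟩ := Filter.mem_cocompact.mp
    (hχdecay (Metric.closedBall_mem_nhds (0:ℂ) hε'pos))
  obtain ⟨R, hRK⟩ := hKcomp.isBounded.subset_closedBall 0
  have hR : ∀ t : ℝ, R < |t| → ‖χ t‖ ≤ ε' := by
    intro t ht
    have htK : t ∉ K := by
      intro hmem
      have := hRK hmem
      rw [Metric.mem_closedBall, Real.dist_eq, sub_zero] at this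
      linarith
    have := hKsub htK
    simpa [Metric.mem_closedBall, dist_zero_right] using this
  set M : ℕ := ⌈R * n / 2⌉₊ + 1 with hMdef
  have hMR : R < 2 * M / n := by
    have h1 : R * n / 2 ≤ (⌈R * n / 2⌉₊ : ℝ) := Nat.le_ceil _
    have h2 : (M:ℝ) = (⌈R * n / 2⌉₊ : ℝ) + 1 := by rw [hMdef]; push_cast; ring
    have h3 : R * n < 2 * (M:ℝ) := by nlinarith
    rw [lt_div_iff₀ hn0]
    linarith
  set q : ℕ → ℝ := fun k => -(n:ℝ) - 2 * M / n + 2 * k / n with hqdef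
  have hq_succ : ∀ k : ℕ, q (k+1) = q k + 2 / n := by
    intro k
    rw [hqdef]
    push_cast
    field_simp
    ring
  have hq_mono : ∀ k l : ℕ, k ≤ l → q k ≤ q l := by
    intro k l hkl
    rw [hqdef]
    have : (k:ℝ) ≤ l := by exact_mod_cast hkl
    have h1 : 2 * (k:ℝ) / n ≤ 2 * (l:ℝ) / n := by gcongr
    simp only
    linarith
  have hqx : ∀ i : ℕ, q (i + M) = gridPt n i := by
    intro i
    rw [hqdef, hgrid]
    push_cast
    field_simp
    ring
  have hMdecay : ∀ j : ℕ, ‖χ (q 0 - gridPt n j)‖ ≤ ε' := by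
    intro j
    apply hR
    have h1 : q 0 - gridPt n j = -(2 * M / n) - 2 * j / n := by
      rw [hqdef, hgrid]; push_cast; ring
    have h2 : (0:ℝ) ≤ 2 * j / n := by positivity
    have h3 : (0:ℝ) ≤ 2 * M / n := by positivity
    rw [h1, abs_of_nonpos (by linarith)]
    linarith
  -- telescoping data
  set d : ℕ → ℕ → ℂ := fun k j => χ (q (k+1) - gridPt n j) - χ (q k - gridPt n j) with hddef
  set Sk : ℕ → Finset ℕ := fun k => (Finset.range (n*n)).filter (fun i => k < i + M) with hSkdef
  set Ck : ℕ → ℝ := fun k => ∫ s in (q k)..(q (k+1)), Ψ s with hCkdef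
  have hCk_nn : ∀ k, 0 ≤ Ck k := fun k =>
    intervalIntegral.integral_nonneg (hq_mono k (k+1) (Nat.le_succ k)) (fun u _ => hΨ_nn u)
  -- Step A1 : insert the projections into the double sum
  have hA1 : Pm.P (Set.Iio b₁) ∘L doubleStieltjesSum Pm χ S n ∘L Pm.P (Set.Ici a₂)
      = ∑ i ∈ Finset.range (n*n), ∑ j ∈ Finset.range (n*n),
          χ (gridPt n i - gridPt n j) • (Q i ∘L S ∘L Rp j) := by
    unfold doubleStieltjesSum
    ext v
    simp only [hQdef, hRpdef, hAQdef, hARdef, Pm.inter, ContinuousLinearMap.coe_comp',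
      Function.comp_apply, ContinuousLinearMap.sum_apply, ContinuousLinearMap.smul_apply,
      map_sum, _root_.map_smul]
  have htel : ∀ i j : ℕ, χ (gridPt n i - gridPt n j)
      = χ (q 0 - gridPt n j) + ∑ k ∈ Finset.range (i + M), d k j := by
    intro i j
    have h1 : ∑ k ∈ Finset.range (i + M), d k j
        = χ (q (i + M) - gridPt n j) - χ (q 0 - gridPt n j) :=
      Finset.sum_range_sub (fun k => χ (q k - gridPt n j)) (i + M)
    rw [h1, hqx i]
    ring
  have hA2 : (∑ i ∈ Finset.range (n*n), ∑ j ∈ Finset.range (n*n),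
          χ (gridPt n i - gridPt n j) • (Q i ∘L S ∘L Rp j))
      = ((∑ i ∈ Finset.range (n*n), Q i) ∘L S ∘L
          (∑ j ∈ Finset.range (n*n), χ (q 0 - gridPt n j) • Rp j))
        + ∑ k ∈ Finset.range (n*n + M), ((∑ i ∈ Sk k, Q i) ∘L S ∘L
            (∑ j ∈ Finset.range (n*n), d k j • Rp j)) := by
    have step1 : (∑ i ∈ Finset.range (n*n), ∑ j ∈ Finset.range (n*n),
          χ (gridPt n i - gridPt n j) • (Q i ∘L S ∘L Rp j))
        = (∑ i ∈ Finset.range (n*n), ∑ j ∈ Finset.range (n*n),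
            χ (q 0 - gridPt n j) • (Q i ∘L S ∘L Rp j))
          + ∑ i ∈ Finset.range (n*n), ∑ k ∈ Finset.range (i + M),
              (∑ j ∈ Finset.range (n*n), d k j • (Q i ∘L S ∘L Rp j)) := by
      rw [← Finset.sum_add_distrib]
      apply Finset.sum_congr rfl
      intro i _
      rw [Finset.sum_comm]
      rw [← Finset.sum_add_distrib]
      apply Finset.sum_congr rfl
      intro j _
      rw [htel i j, add_smul, Finset.sum_smul]
    rw [step1]
    congr 1
    · exact aux_factor _ _ Q Rp (fun j => χ (q 0 - gridPt n j)) S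
    · rw [aux_swap (n*n) M (fun i k => ∑ j ∈ Finset.range (n*n), d k j • (Q i ∘L S ∘L Rp j))]
      apply Finset.sum_congr rfl
      intro k _
      exact aux_factor _ _ Q Rp (d k) S
  -- norm bounds
  have hQP : ∀ (t : Finset ℕ), (∑ i ∈ t, Q i) = ∑ i ∈ t, (1:ℂ) • Pm.P (AQ i) := by
    intro t; simp [hQdef]
  have hEnorm : ∀ (t : Finset ℕ), ‖∑ i ∈ t, Q i‖ ≤ 1 := by
    intro t
    rw [hQP]
    exact aux_norm_sum_smul Pm t AQ (fun i _ j _ hij => hAQdisj i j hij) _ 1 zero_le_one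
      (fun i _ => Or.inr (by simp))
  have hDrem : ‖∑ j ∈ Finset.range (n*n), χ (q 0 - gridPt n j) • Rp j‖ ≤ ε' := by
    simp only [hRpdef]
    exact aux_norm_sum_smul Pm _ AR (fun i _ j _ hij => hARdisj i j hij) _ ε'
      (le_of_lt hε'pos) (fun j _ => Or.inr (hMdecay j))
  have hRem : ν ((∑ i ∈ Finset.range (n*n), Q i) ∘L S ∘L
      (∑ j ∈ Finset.range (n*n), χ (q 0 - gridPt n j) • Rp j)) ≤ ν S * ε' := by
    calc ν _ ≤ ‖∑ i ∈ Finset.range (n*n), Q i‖ * ν S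
        * ‖∑ j ∈ Finset.range (n*n), χ (q 0 - gridPt n j) • Rp j‖ := hνideal _ _ _
    _ ≤ 1 * ν S * ε' := by
        apply mul_le_mul (mul_le_mul (hEnorm _) le_rfl (hνnn S) zero_le_one) hDrem
          (norm_nonneg _) (by simpa using hνnn S)
    _ = ν S * ε' := by ring
  -- per-k bound
  have hterm : ∀ k ∈ Finset.range (n*n + M),
      ν ((∑ i ∈ Sk k, Q i) ∘L S ∘L (∑ j ∈ Finset.range (n*n), d k j • Rp j))
        ≤ ν S * Ck k := by
    intro k _
    by_cases hb : q (k+1) < b₁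
    · -- main case
      have hDk : ‖∑ j ∈ Finset.range (n*n), d k j • Rp j‖ ≤ Ck k := by
        simp only [hRpdef]
        apply aux_norm_sum_smul Pm _ AR (fun i _ j _ hij => hARdisj i j hij) _ (Ck k)
          (hCk_nn k)
        intro j _
        by_cases hj : a₂ < gridPt n (j+1)
        · right
          have hab : q k - gridPt n j ≤ q (k+1) - gridPt n j := by
            have := hq_mono k (k+1) (Nat.le_succ k); linarith
          have hftc : d k j = ∫ t in (q k - gridPt n j)..(q (k+1) - gridPt n j), χ' t := by
            rw [intervalIntegral.integral_eq_sub_of_hasDerivAt (fun t _ => hχderiv t)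
              (aux_II χ' hχ'meas.aestronglyMeasurable (φ 0) hχ'le _ _)]
          set φa : ℝ → ℝ := fun t => φm |t| with hφadef
          have hφa_meas : Measurable φa := hφm_meas.comp measurable_abs
          have hφa_nn : ∀ t, 0 ≤ φa t := fun t => hφm_nn _
          have hφa_le : ∀ t, φa t ≤ φ 0 := fun t => hφm_le _
          have hφa_norm : ∀ t, ‖φa t‖ ≤ φ 0 := fun t => by
            rw [Real.norm_eq_abs, abs_of_nonneg (hφa_nn t)]; exact hφa_le t
          have habs : ‖d k j‖
              ≤ |∫ t in (q k - gridPt n j)..(q (k+1) - gridPt n j), φa t| := by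
            rw [hftc]
            exact intervalIntegral.norm_integral_le_abs_of_norm_le
              (ae_of_all _ (fun t => hχ'm t))
              (aux_II φa hφa_meas.aestronglyMeasurable (φ 0) hφa_norm _ _)
          have h3 : |∫ t in (q k - gridPt n j)..(q (k+1) - gridPt n j), φa t|
              = ∫ t in (q k - gridPt n j)..(q (k+1) - gridPt n j), φa t :=
            abs_of_nonneg (intervalIntegral.integral_nonneg hab (fun u _ => hφa_nn _))
          have h4 := intervalIntegral.integral_comp_sub_right
            (a := q k) (b := q (k+1)) φa (gridPt n j)
          have h5 : (∫ s in (q k)..(q (k+1)), φa (s - gridPt n j)) ≤ Ck k := by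
            apply intervalIntegral.integral_mono_on (hq_mono k (k+1) (Nat.le_succ k))
              (aux_II (fun s => φa (s - gridPt n j))
                ((hφa_meas.comp (measurable_id.sub measurable_const)).aestronglyMeasurable)
                (φ 0) (fun t => hφa_norm _) _ _)
              (hΨII _ _)
            intro s hs
            have hsb : s < b₁ := lt_of_le_of_lt hs.2 hb
            have hmem : y₀ - s ∈ Set.Ioi γ := by
              rw [Set.mem_Ioi, ← hy₀b]; linarith
            have hΨs : Ψ s = φm (y₀ - s) := by
              rw [hΨdef]
              simp only
              rw [hΦdef, Set.indicator_of_mem hmem]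
            rw [hΨs]
            apply hφm_anti
            have hxj : y₀ ≤ gridPt n j := by
              have hsucc := hgrid_succ j
              rw [hy₀def]
              linarith
            calc y₀ - s ≤ gridPt n j - s := by linarith
            _ ≤ |gridPt n j - s| := le_abs_self _
            _ = |s - gridPt n j| := abs_sub_comm _ _
          calc ‖d k j‖ ≤ _ := habs
          _ = _ := h3
          _ = _ := h4.symm
          _ ≤ Ck k := h5
        · left
          have hempty : AR j = ∅ := by
            rw [hARdef]
            apply Set.eq_empty_iff_forall_notMem.mpr
            rintro u ⟨hu1, hu2⟩
            push_neg at hj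
            have : u < gridPt n (j+1) := hu1.2
            have : a₂ ≤ u := hu2
            linarith
          rw [hempty]
          exact Pm.empty
      calc ν _ ≤ ‖∑ i ∈ Sk k, Q i‖ * ν S * ‖∑ j ∈ Finset.range (n*n), d k j • Rp j‖ :=
          hνideal _ _ _
      _ ≤ 1 * ν S * Ck k := by
          apply mul_le_mul (mul_le_mul (hEnorm _) le_rfl (hνnn S) zero_le_one) hDk
            (norm_nonneg _) (by simpa using hνnn S)
      _ = ν S * Ck k := by ring
    · -- degenerate case : all Q i vanish
      push_neg at hb
      have hzero : ∀ i ∈ Sk k, Q i = 0 := by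
        intro i hi
        rw [hSkdef] at hi
        simp only [Finset.mem_filter, Finset.mem_range] at hi
        have hk1 : k + 1 ≤ i + M := hi.2
        have hxi : b₁ ≤ gridPt n i := by
          have := hq_mono (k+1) (i+M) hk1
          rw [hqx i] at this
          linarith
        have hempty : AQ i = ∅ := by
          rw [hAQdef]
          apply Set.eq_empty_iff_forall_notMem.mpr
          rintro u ⟨hu1, hu2⟩
          have : gridPt n i ≤ u := hu2.1
          have : u < b₁ := hu1
          linarith
        rw [hQdef]
        simp only
        rw [hempty]
        exact Pm.empty
      have hE0 : (∑ i ∈ Sk k, Q i) = 0 := Finset.sum_eq_zero hzero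
      rw [hE0]
      simp only [ContinuousLinearMap.zero_comp]
      rw [hν0]
      exact mul_nonneg (hνnn S) (hCk_nn k)
  -- sum the interval integrals
  have hCksum : ∑ k ∈ Finset.range (n*n + M), Ck k = ∫ s in (q 0)..(q (n*n + M)), Ψ s :=
    intervalIntegral.sum_integral_adjacent_intervals (fun k _ => hΨII _ _)
  have hCB : (∫ s in (q 0)..(q (n*n + M)), Ψ s) ≤ ∫ u in Set.Ioi γ, φm u := by
    have hΨΦ : (∫ s in (q 0)..(q (n*n + M)), Ψ s)
        = ∫ u in (y₀ - q (n*n + M))..(y₀ - q 0), Φ u := by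
      rw [hΨdef]
      exact intervalIntegral.integral_comp_sub_left Φ y₀
    have hle : y₀ - q (n*n + M) ≤ y₀ - q 0 := by
      have := hq_mono 0 (n*n + M) (Nat.zero_le _); linarith
    rw [hΨΦ, intervalIntegral.integral_of_le hle, ← integral_indicator measurableSet_Ioc]
    have h2 : (∫ u, Set.indicator (Set.Ioc (y₀ - q (n*n + M)) (y₀ - q 0)) Φ u)
        ≤ ∫ u, Φ u :=
      integral_mono (hΦint.indicator measurableSet_Ioc) hΦint
        (Set.indicator_le_self' (fun u _ => hΦ_nn u))
    have h3 : (∫ u, Φ u) = ∫ u in Set.Ioi γ, φm u := by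
      rw [hΦdef, integral_indicator measurableSet_Ioi]
    linarith
  -- assemble everything
  rw [hA1, hA2]
  calc ν _ ≤ ν ((∑ i ∈ Finset.range (n*n), Q i) ∘L S ∘L
        (∑ j ∈ Finset.range (n*n), χ (q 0 - gridPt n j) • Rp j))
      + ν (∑ k ∈ Finset.range (n*n + M), ((∑ i ∈ Sk k, Q i) ∘L S ∘L
          (∑ j ∈ Finset.range (n*n), d k j • Rp j))) := hνtri _ _
  _ ≤ ν S * ε' + ∑ k ∈ Finset.range (n*n + M),
        ν ((∑ i ∈ Sk k, Q i) ∘L S ∘L (∑ j ∈ Finset.range (n*n), d k j • Rp j)) :=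
      add_le_add hRem (aux_nu_sum ν hν0 hνtri _ _)
  _ ≤ ν S * ε' + ∑ k ∈ Finset.range (n*n + M), ν S * Ck k :=
      add_le_add le_rfl (Finset.sum_le_sum hterm)
  _ = ν S * ε' + ν S * ∑ k ∈ Finset.range (n*n + M), Ck k := by rw [Finset.mul_sum]
  _ ≤ ν S * ε' + ν S * ∫ u in Set.Ioi γ, φm u := by
      apply add_le_add le_rfl
      apply mul_le_mul_of_nonneg_left _ (hνnn S)
      rw [hCksum]
      exact hCB
  _ ≤ (ν S * ∫ u in Set.Ioi γ, φm u) + ε := by linarith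

/-- If `χ` is differentiable, vanishes at infinity, and `|χ'(x)| ≤ φ(|x|)` with
`φ ≥ 0` non-increasing and integrable, then for the intervals `Δ¹ = (-∞, b₁)`
and `Δ² = [a₂, ∞)` with `δ = a₂ - b₁ ≥ 0`, the double operator integral
`Sχ = ∫∫ χ(x−y) P(dx) S P(dy)` of a trace-class `S` satisfies
`‖P(Δ¹) Sχ P(Δ²)‖₁ ≤ ‖S‖₁ ∫_δ^∞ φ(s) ds`. -/
theorem double_operator_integral_offdiagonal_bound (Pm : ProjValMeasure H)
    (ν : (H →L[ℂ] H) → ℝ)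
    (hν0 : ν 0 = 0) (hνnn : ∀ S, 0 ≤ ν S)
    (hνtri : ∀ S T, ν (S + T) ≤ ν S + ν T)
    (hνop : ∀ S, ‖S‖ ≤ ν S)
    (hνideal : ∀ (A S B : H →L[ℂ] H), ν (A ∘L S ∘L B) ≤ ‖A‖ * ν S * ‖B‖)
    (χ : ℝ → ℂ) (χ' : ℝ → ℂ) (φ : ℝ → ℝ)
    (hχderiv : ∀ x, HasDerivAt χ (χ' x) x)
    (hχdecay : Tendsto χ (cocompact ℝ) (nhds 0))
    (hχ'bound : ∀ x, ‖χ' x‖ ≤ φ |x|)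
    (hφnn : ∀ s, 0 ≤ φ s)
    (hφmono : AntitoneOn φ (Set.Ici (0 : ℝ)))
    (hφint : IntegrableOn φ (Set.Ioi (0 : ℝ)) volume)
    (S Sχ : H →L[ℂ] H) (hS : IsDoubleStieltjesIntegral Pm χ S Sχ)
    (b₁ a₂ : ℝ) (hδ : 0 ≤ a₂ - b₁) :
    ν (Pm.P (Set.Iio b₁) ∘L Sχ ∘L Pm.P (Set.Ici a₂)) ≤
      ν S * ∫ s in Set.Ioi (a₂ - b₁), φ s := by
  classical
  set δ := a₂ - b₁ with hδdef
  set φm : ℝ → ℝ := fun u => φ (max u 0) with hφm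
  set L : ℝ := ∫ s in Set.Ioi δ, φ s with hLdef
  -- basic properties of φm
  have hφm_anti : Antitone φm := by
    intro u v huv
    exact hφmono (Set.mem_Ici.mpr (le_max_right u 0)) (Set.mem_Ici.mpr (le_max_right v 0))
      (max_le_max huv le_rfl)
  have hφm_meas : Measurable φm := hφm_anti.measurable
  have hφm_nn : ∀ u, 0 ≤ φm u := fun u => hφnn _
  have hφm_le : ∀ u, φm u ≤ φ 0 := fun u =>
    hφmono (Set.mem_Ici.mpr le_rfl) (Set.mem_Ici.mpr (le_max_right u 0)) (le_max_right u 0)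
  have hχ'm : ∀ t : ℝ, ‖χ' t‖ ≤ φm |t| := by
    intro t
    have : φm |t| = φ |t| := by simp [hφm, max_eq_left (abs_nonneg t)]
    rw [this]; exact hχ'bound t
  have hχ'le : ∀ t : ℝ, ‖χ' t‖ ≤ φ 0 := fun t => (hχ'm t).trans (hφm_le _)
  have hχ'meas : Measurable χ' := by
    have : χ' = deriv χ := funext fun t => ((hχderiv t).deriv).symm
    rw [this]
    exact measurable_deriv χ
  -- integrability of φm on tails
  have hIφm : ∀ c : ℝ, IntegrableOn φm (Set.Ioi c) volume := by
    intro c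
    rcases le_or_gt 0 c with hc | hc
    · have h1 : IntegrableOn φ (Set.Ioi c) volume :=
        hφint.mono_set (Set.Ioi_subset_Ioi hc)
      apply h1.congr_fun (fun u hu => ?_) measurableSet_Ioi
      simp [hφm, max_eq_left (le_of_lt (lt_of_le_of_lt hc hu))]
    · have h1 : IntegrableOn φm (Set.Ioc c 0) volume := by
        apply Integrable.mono' (g := fun _ => φ 0)
        · exact integrableOn_const measure_Ioc_lt_top.ne
        · exact (hφm_meas.aestronglyMeasurable).restrict
        · exact ae_of_all _ fun u => by
            rw [Real.norm_eq_abs, abs_of_nonneg (hφm_nn u)]; exact hφm_le u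
      have h2 : IntegrableOn φm (Set.Ioi 0) volume := by
        apply hφint.congr_fun (fun u hu => ?_) measurableSet_Ioi
        simp [hφm, max_eq_left (le_of_lt (Set.mem_Ioi.mp hu))]
      have := h1.union h2
      rwa [Set.Ioc_union_Ioi_eq_Ioi (le_of_lt hc)] at this
  have hLφm : ∫ u in Set.Ioi δ, φm u = L := by
    rw [hLdef]
    apply setIntegral_congr_fun measurableSet_Ioi
    intro u hu
    simp [hφm, max_eq_left (le_of_lt (lt_of_le_of_lt hδ hu))]
  -- the n-dependent bound
  set B : ℕ → ℝ := fun n => ∫ u in Set.Ioi (δ - 2 / (n : ℝ)), φm u with hBdef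
  have hBlow : ∀ n : ℕ, L ≤ B n := by
    intro n
    rw [← hLφm]
    apply setIntegral_mono_set (hIφm _)
      (ae_of_all _ fun u => hφm_nn u)
    apply HasSubset.Subset.eventuallyLE
    apply Set.Ioi_subset_Ioi
    have : 0 ≤ 2 / (n : ℝ) := by positivity
    linarith
  have hBup : ∀ n : ℕ, B n ≤ L + φ 0 * (2 / (n : ℝ)) := by
    intro n
    have hγδ : δ - 2 / (n : ℝ) ≤ δ := by
      have : 0 ≤ 2 / (n : ℝ) := by positivity
      linarith
    have hsplit : B n = (∫ u in Set.Ioc (δ - 2 / (n : ℝ)) δ, φm u)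
        + ∫ u in Set.Ioi δ, φm u := by
      rw [hBdef]
      rw [← setIntegral_union (Set.Ioc_disjoint_Ioi le_rfl) measurableSet_Ioi
        ((hIφm _).mono_set Set.Ioc_subset_Ioi_self) (hIφm _)]
      rw [Set.Ioc_union_Ioi_eq_Ioi hγδ]
    have hsmall : (∫ u in Set.Ioc (δ - 2 / (n : ℝ)) δ, φm u) ≤ φ 0 * (2 / (n : ℝ)) := by
      have h1 : (∫ u in Set.Ioc (δ - 2 / (n : ℝ)) δ, φm u)
          ≤ ∫ _u in Set.Ioc (δ - 2 / (n : ℝ)) δ, φ 0 := by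
        apply setIntegral_mono_on ((hIφm _).mono_set Set.Ioc_subset_Ioi_self)
          (integrableOn_const measure_Ioc_lt_top.ne) measurableSet_Ioc
        intro u _
        exact hφm_le u
      have h2 : (∫ _u in Set.Ioc (δ - 2 / (n : ℝ)) δ, φ 0)
          = φ 0 * (2 / (n : ℝ)) := by
        rw [setIntegral_const, Real.volume_real_Ioc_of_le hγδ, smul_eq_mul, mul_comm]
        congr 1
        ring
      linarith
    rw [hsplit, ← hLφm]
    linarith
  -- the key quantitative bound for each n ≥ 1
  have hmain : ∀ n : ℕ, 1 ≤ n →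
      ν (Pm.P (Set.Iio b₁) ∘L doubleStieltjesSum Pm χ S n ∘L Pm.P (Set.Ici a₂))
        ≤ ν S * B n := by
    intro n hn
    exact hmain_aux Pm ν hν0 hνnn hνtri hνideal χ χ' φ hχderiv hχdecay hχ'bound
      hφnn hφmono hφint S b₁ a₂ hδ n hn
  -- pass to the limit
  have hene : ∀ᶠ n in atTop,
      ν (Pm.P (Set.Iio b₁) ∘L Sχ ∘L Pm.P (Set.Ici a₂))
        ≤ ν S * B n + ν (1 : H →L[ℂ] H) * ‖(Pm.P (Set.Iio b₁) ∘L Sχ ∘L Pm.P (Set.Ici a₂))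
            - (Pm.P (Set.Iio b₁) ∘L doubleStieltjesSum Pm χ S n ∘L Pm.P (Set.Ici a₂))‖ := by
    filter_upwards [eventually_ge_atTop 1] with n hn
    set X := Pm.P (Set.Iio b₁) ∘L Sχ ∘L Pm.P (Set.Ici a₂)
    set Y := Pm.P (Set.Iio b₁) ∘L doubleStieltjesSum Pm χ S n ∘L Pm.P (Set.Ici a₂)
    have h1 : ν X ≤ ν Y + ν (X - Y) := by
      have := hνtri Y (X - Y)
      simpa using this
    have h2 : ν (X - Y) ≤ ν (1 : H →L[ℂ] H) * ‖X - Y‖ := by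
      have h3 := hνideal (X - Y) (1 : H →L[ℂ] H) (1 : H →L[ℂ] H)
      have h4 : (X - Y) ∘L (1 : H →L[ℂ] H) ∘L (1 : H →L[ℂ] H) = X - Y := by ext v; simp
      rw [h4] at h3
      have h5 : ‖(1 : H →L[ℂ] H)‖ ≤ 1 := ContinuousLinearMap.norm_id_le
      calc ν (X - Y) ≤ ‖X - Y‖ * ν (1 : H →L[ℂ] H) * ‖(1 : H →L[ℂ] H)‖ := h3
      _ ≤ ‖X - Y‖ * ν (1 : H →L[ℂ] H) * 1 := by
          apply mul_le_mul_of_nonneg_left h5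
          exact mul_nonneg (norm_nonneg _) (hνnn _)
      _ = ν (1 : H →L[ℂ] H) * ‖X - Y‖ := by ring
    calc ν X ≤ ν Y + ν (X - Y) := h1
    _ ≤ ν S * B n + ν (1 : H →L[ℂ] H) * ‖X - Y‖ := add_le_add (hmain n hn) h2
  have hBtend : Tendsto (fun n : ℕ => ν S * B n) atTop (nhds (ν S * L)) := by
    apply tendsto_of_tendsto_of_tendsto_of_le_of_le'
      (tendsto_const_nhds) ?upper
      (Eventually.of_forall fun n => mul_le_mul_of_nonneg_left (hBlow n) (hνnn S))
      (Eventually.of_forall fun n => ?_)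
    case upper =>
      have h1 : Tendsto (fun n : ℕ => (2 : ℝ) / n) atTop (nhds 0) :=
        tendsto_const_div_atTop_nhds_zero_nat 2
      have h2 : Tendsto (fun n : ℕ => ν S * L + ν S * (φ 0 * (2 / (n:ℝ)))) atTop
          (nhds (ν S * L + ν S * (φ 0 * 0))) :=
        tendsto_const_nhds.add (((h1.const_mul (φ 0)).const_mul (ν S)))
      simpa using h2
    · have := hBup n
      have h3 : ν S * B n ≤ ν S * (L + φ 0 * (2 / (n:ℝ))) :=
        mul_le_mul_of_nonneg_left this (hνnn S)
      linarith [h3]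
  have hnormtend : Tendsto (fun n : ℕ =>
      ‖(Pm.P (Set.Iio b₁) ∘L Sχ ∘L Pm.P (Set.Ici a₂))
        - (Pm.P (Set.Iio b₁) ∘L doubleStieltjesSum Pm χ S n ∘L Pm.P (Set.Ici a₂))‖)
      atTop (nhds 0) := by
    have hcomp : Tendsto (fun n => Pm.P (Set.Iio b₁) ∘L doubleStieltjesSum Pm χ S n
        ∘L Pm.P (Set.Ici a₂)) atTop
        (nhds (Pm.P (Set.Iio b₁) ∘L Sχ ∘L Pm.P (Set.Ici a₂))) := by
      have c1 : Continuous (fun T : H →L[ℂ] H => Pm.P (Set.Iio b₁) ∘L T ∘L Pm.P (Set.Ici a₂)) := by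
        exact ((ContinuousLinearMap.compL ℂ H H H (Pm.P (Set.Iio b₁))).continuous.comp
          (((ContinuousLinearMap.compL ℂ H H H).flip (Pm.P (Set.Ici a₂))).continuous))
      exact (c1.tendsto Sχ).comp hS
    rw [tendsto_iff_norm_sub_tendsto_zero] at hcomp
    simpa [norm_sub_rev] using hcomp
  have hutend : Tendsto (fun n : ℕ => ν S * B n + ν (1 : H →L[ℂ] H) * ‖(Pm.P (Set.Iio b₁) ∘L Sχ
      ∘L Pm.P (Set.Ici a₂)) - (Pm.P (Set.Iio b₁) ∘L doubleStieltjesSum Pm χ S n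
      ∘L Pm.P (Set.Ici a₂))‖) atTop (nhds (ν S * L)) := by
    have := hBtend.add ((hnormtend.const_mul (ν (1 : H →L[ℂ] H))))
    simpa using this
  exact ge_of_tendsto hutend hene
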